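/- There exists a universal constant C > 0 such that for all λ, λ' ∈ (0,∞) and all a ∈ ℤ, | P(V(λ) = V'(λ') + a) − (λ+λ')^{−1/2}·g(1; (−λ+λ'+a)/(λ+λ')^{1/2}) | ≤ C/(λ+λ'). In other words, the Skellam probability mass function admits a Gaussian local approximation with error of order 1/(λ+λ'), uniformly in the argument a. -/

import Mathlib

open MeasureTheory Filter Set

noncomputable section

/-- Binomial probability mass at integer index `j`, parameters `(m, p)`:
`C(m,j) p^j (1-p)^(m-j)`, interpreted as `0` unless `0 ≤ j ≤ m`. -/
def binPMF (m : ℕ) (p : ℝ) (j : ℤ) : ℝ :=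
  if 0 ≤ j then (m.choose j.toNat : ℝ) * p ^ j.toNat * (1 - p) ^ (m - j.toNat) else 0

/-- `P(S_m(p) = S'_{m'}(p') + n)` for independent binomial random variables
`S_m(p)` and `S'_{m'}(p')`. -/
def PSS (m m' : ℕ) (p p' : ℝ) (n : ℤ) : ℝ :=
  ∑ k ∈ Finset.range (m' + 1), binPMF m' p' (k : ℤ) * binPMF m p ((k : ℤ) + n)

/-- Poisson probability mass function with mean `l`. -/
def poisPMF (l : ℝ) (k : ℕ) : ℝ := Real.exp (-l) * l ^ k / (Nat.factorial k)

/-- `P(V(l) = V'(l') + n)` for independent Poisson random variables with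
means `l` and `l'`. -/
def PVV (l l' : ℝ) (n : ℤ) : ℝ :=
  ∑' k : ℕ, if 0 ≤ (k : ℤ) + n then poisPMF l' k * poisPMF l ((k : ℤ) + n).toNat else 0

/-- Centered Gaussian density with variance `v`, evaluated at `x`. -/
def gaussD (v x : ℝ) : ℝ := (Real.sqrt (2 * Real.pi * v))⁻¹ * Real.exp (-x ^ 2 / (2 * v))

/-- Euclidean distance of two points of `ℝ × ℝ` (viewed as `ℝ²`). -/
def enorm2 (a b : ℝ × ℝ) : ℝ := Real.sqrt ((a.1 - b.1) ^ 2 + (a.2 - b.2) ^ 2)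

/-- Two-dimensional heat kernel `Q_t(a,b)`. -/
def heatK (t : ℝ) (a b : ℝ × ℝ) : ℝ :=
  (2 * Real.pi * t)⁻¹ * Real.exp (-((a.1 - b.1) ^ 2 + (a.2 - b.2) ^ 2) / (2 * t))

/-- `M_N(u,r) = ⌊N r + N r · u / N^{1/2}⌋`. -/
def Mfl (N : ℕ) (u r : ℝ) : ℤ := ⌊(N : ℝ) * r + (N : ℝ) * r * (u / Real.sqrt N)⌋

/-- `𝔟^N(x,y;r,s,t) = ∏_{j=1,2} P(S_{M_j}(r/(Ns)) = S'_{M_j'}(r/(Nt)))`. -/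
def bUpper (N : ℕ) (x y : ℝ × ℝ) (r s t : ℝ) : ℝ :=
  PSS (Mfl N x.1 s).toNat (Mfl N y.1 t).toNat (r / ((N : ℝ) * s)) (r / ((N : ℝ) * t)) 0 *
  PSS (Mfl N x.2 s).toNat (Mfl N y.2 t).toNat (r / ((N : ℝ) * s)) (r / ((N : ℝ) * t)) 0

/-- `𝔟_N(x,y;r,s,t) = ∏_{j=1,2} N^{1/2} P(S_{M_j}(r/s) = S'_{M_j'}(r/t))`. -/
def bLower (N : ℕ) (x y : ℝ × ℝ) (r s t : ℝ) : ℝ :=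
  (Real.sqrt N * PSS (Mfl N x.1 s).toNat (Mfl N y.1 t).toNat (r / s) (r / t) 0) *
  (Real.sqrt N * PSS (Mfl N x.2 s).toNat (Mfl N y.2 t).toNat (r / s) (r / t) 0)

/-- The primary condition over `[T₀, T₁]` (with parameter `η ∈ (0,1/2)`). -/
def primaryCond (η T0 T1 : ℝ) (x y : ℝ × ℝ) (s t : ℝ) (N : ℕ) : Prop :=
  |x.1| ≤ (N : ℝ) ^ η / 2 ∧ |x.2| ≤ (N : ℝ) ^ η / 2 ∧
  |y.1| ≤ (N : ℝ) ^ η / 2 ∧ |y.2| ≤ (N : ℝ) ^ η / 2 ∧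
  T0 ≤ s ∧ s ≤ t ∧ t ≤ T1 ∧ 16 ≤ N ∧
  1 ≤ ⌊T0 * (N : ℝ) ^ ((1 : ℝ) / 2 - η) / 2⌋

/-- Indicator of `[1, ∞)`. -/
def ind1 (r : ℝ) : ℝ := if 1 ≤ r then 1 else 0

section
open Complex
open scoped NNReal ENNReal

namespace SkellamAux

lemma ctsum_exp (z : ℂ) : ∑' n : ℕ, z ^ n / (n.factorial : ℂ) = Complex.exp z := by
  rw [Complex.exp_eq_exp_ℂ, NormedSpace.exp_eq_tsum_div]

lemma rtsum_exp (x : ℝ) : ∑' n : ℕ, x ^ n / (n.factorial : ℝ) = Real.exp x := by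
  rw [Real.exp_eq_exp_ℝ, NormedSpace.exp_eq_tsum_div]

lemma poisPMF_nonneg {l : ℝ} (hl : 0 ≤ l) (k : ℕ) : 0 ≤ poisPMF l k := by
  unfold poisPMF; positivity

lemma summable_poisPMF (l : ℝ) : Summable (poisPMF l) := by
  unfold poisPMF
  simp_rw [mul_div_assoc]
  exact (Real.summable_pow_div_factorial l).mul_left _

lemma tsum_poisPMF (l : ℝ) : ∑' k, poisPMF l k = 1 := by
  unfold poisPMF
  simp_rw [mul_div_assoc]
  rw [tsum_mul_left, rtsum_exp, ← Real.exp_add]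
  simp

lemma poisPMF_le_one {l : ℝ} (hl : 0 ≤ l) (k : ℕ) : poisPMF l k ≤ 1 := by
  have := (summable_poisPMF l).le_tsum k (fun j _ => poisPMF_nonneg hl j)
  simpa [tsum_poisPMF l] using this

lemma PVV_nonneg {l l' : ℝ} (hl : 0 ≤ l) (hl' : 0 ≤ l') (n : ℤ) : 0 ≤ PVV l l' n := by
  refine tsum_nonneg fun k => ?_
  split
  · exact mul_nonneg (poisPMF_nonneg hl' _) (poisPMF_nonneg hl _)
  · exact le_rfl

lemma summable_PVV_term {l l' : ℝ} (hl : 0 ≤ l) (hl' : 0 ≤ l') (n : ℤ) :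
    Summable (fun k : ℕ => if 0 ≤ (k : ℤ) + n then poisPMF l' k * poisPMF l ((k : ℤ) + n).toNat else 0) := by
  refine (summable_poisPMF l').of_nonneg_of_le (fun k => ?_) (fun k => ?_)
  · split
    · exact mul_nonneg (poisPMF_nonneg hl' _) (poisPMF_nonneg hl _)
    · exact le_rfl
  · split
    · calc poisPMF l' k * poisPMF l _ ≤ poisPMF l' k * 1 := by
            exact mul_le_mul_of_nonneg_left (poisPMF_le_one hl _) (poisPMF_nonneg hl' _)
        _ = poisPMF l' k := mul_one _
    · exact poisPMF_nonneg hl' k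

lemma PVV_le_one {l l' : ℝ} (hl : 0 ≤ l) (hl' : 0 ≤ l') (n : ℤ) : PVV l l' n ≤ 1 := by
  have h1 : PVV l l' n ≤ ∑' k, poisPMF l' k := by
    refine (summable_PVV_term hl hl' n).tsum_le_tsum (fun k => ?_) (summable_poisPMF l')
    split
    · calc poisPMF l' k * poisPMF l _ ≤ poisPMF l' k * 1 :=
            mul_le_mul_of_nonneg_left (poisPMF_le_one hl _) (poisPMF_nonneg hl' _)
        _ = poisPMF l' k := mul_one _
    · exact poisPMF_nonneg hl' k
  simpa [tsum_poisPMF l'] using h1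



lemma summable_char (l : ℝ) (w : ℂ) (hw : ‖w‖ = 1) :
    Summable (fun j : ℕ => ‖(poisPMF l j : ℂ) * w ^ j‖) := by
  have : (fun j : ℕ => ‖(poisPMF l j : ℂ) * w ^ j‖) = fun j => |poisPMF l j| := by
    funext j
    simp [norm_mul, norm_pow, hw]
  rw [this]
  exact (Real.summable_pow_div_factorial l).mul_left (Real.exp (-l)) |>.abs.congr
    (fun j => by simp [poisPMF, mul_div_assoc, abs_mul])

lemma pois_char (l : ℝ) (w : ℂ) :
    ∑' j : ℕ, (poisPMF l j : ℂ) * w ^ j = Complex.exp (l * (w - 1)) := by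
  have h : ∀ j : ℕ, (poisPMF l j : ℂ) * w ^ j
      = Complex.exp (-l) * (((l : ℂ) * w) ^ j / (j.factorial : ℂ)) := by
    intro j
    simp only [poisPMF]
    push_cast
    rw [mul_pow]
    ring
  simp_rw [h]
  rw [tsum_mul_left, ctsum_exp, ← Complex.exp_add]
  push_cast
  ring_nf

/-- integral of `exp(i n θ)` over `Ioc (-π) π`. -/
lemma integral_exp_int (n : ℤ) :
    ∫ θ : ℝ in Ioc (-Real.pi) Real.pi, Complex.exp ((n : ℂ) * θ * I)
      = if n = 0 then (2 * Real.pi : ℂ) else 0 := by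
  have hpi : -Real.pi ≤ Real.pi := by linarith [Real.pi_pos]
  rcases eq_or_ne n 0 with hn | hn
  · simp only [hn, Int.cast_zero, zero_mul, Complex.exp_zero, if_true]
    rw [setIntegral_const]
    rw [measureReal_def, Real.volume_Ioc]
    rw [ENNReal.toReal_ofReal (by linarith [Real.pi_pos] : (0:ℝ) ≤ Real.pi - -Real.pi)]
    rw [Complex.real_smul, mul_one]
    push_cast
    ring
  · rw [← intervalIntegral.integral_of_le hpi]
    have hd : ∀ θ : ℝ, HasDerivAt (fun θ : ℝ => Complex.exp ((n : ℂ) * θ * I) / ((n : ℂ) * I))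
        (Complex.exp ((n : ℂ) * θ * I)) θ := by
      intro θ
      have h1 : HasDerivAt (fun θ : ℝ => ((n : ℂ) * θ * I)) ((n : ℂ) * I) θ := by
        have h0 := (Complex.ofRealCLM.hasDerivAt (x := θ)).mul_const ((n : ℂ) * I)
        have heq : (fun s : ℝ => (Complex.ofRealCLM s) * ((n : ℂ) * I))
            = fun s : ℝ => ((n : ℂ) * s * I) := by
          funext s; simp [Complex.ofRealCLM_apply]; ring
        rw [heq] at h0
        simpa using h0
      have hni : ((n : ℂ) * I) ≠ 0 := by
        simp [hn, Complex.I_ne_zero]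
      have h3 := h1.cexp.div_const ((n : ℂ) * I)
      rw [mul_div_assoc, div_self hni, mul_one] at h3
      exact h3
    rw [intervalIntegral.integral_eq_sub_of_hasDerivAt (fun θ _ => hd θ)
      ((Complex.continuous_exp.comp (by continuity)).intervalIntegrable _ _)]
    have he : ∀ s : ℝ, Complex.exp ((n : ℂ) * s * I) = Complex.exp ((s : ℂ) * I) ^ n := by
      intro s
      rw [← Complex.exp_int_mul]
      ring_nf
    rw [if_neg hn]
    rw [he, he]
    have h1 : Complex.exp ((Real.pi : ℂ) * I) = -1 := Complex.exp_pi_mul_I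
    have h2 : Complex.exp (((-Real.pi : ℝ) : ℂ) * I) = -1 := by
      push_cast
      rw [neg_mul, Complex.exp_neg, Complex.exp_pi_mul_I]
      norm_num
    rw [h1, h2, sub_self]


lemma exp_diff_le {z w : ℂ} {m : ℝ} (hz : z.re ≤ m) (hw : w.re ≤ m) :
    ‖Complex.exp z - Complex.exp w‖ ≤ Real.exp m * ‖z - w‖ := by
  have hconv : Convex ℝ {c : ℂ | c.re ≤ m} := convex_halfSpace_re_le m
  have hder : ∀ x ∈ {c : ℂ | c.re ≤ m},
      HasDerivWithinAt Complex.exp (Complex.exp x) {c : ℂ | c.re ≤ m} x :=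
    fun x _ => (Complex.hasDerivAt_exp x).hasDerivWithinAt
  have hbound : ∀ x ∈ {c : ℂ | c.re ≤ m}, ‖Complex.exp x‖ ≤ Real.exp m := fun x hx => by
    rw [Complex.norm_exp]
    exact Real.exp_le_exp.mpr hx
  exact hconv.norm_image_sub_le_of_norm_hasDerivWithin_le hder hbound hw hz

lemma hasDerivAt_cexp_mul_I (s : ℝ) :
    HasDerivAt (fun s : ℝ => Complex.exp ((s : ℂ) * I)) (Complex.exp ((s : ℂ) * I) * I) s := by
  have h0 := ((Complex.ofRealCLM.hasDerivAt (x := s)).mul_const I).cexp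
  simpa using h0

lemma hasDerivAt_linear (s : ℝ) : HasDerivAt (fun s : ℝ => (s : ℂ) * I) I s := by
  have h0 := (Complex.ofRealCLM.hasDerivAt (x := s)).mul_const I
  simpa using h0

lemma hasDerivAt_sq_half (s : ℝ) :
    HasDerivAt (fun s : ℝ => ((s : ℂ) * (s : ℂ)) / 2) ((s : ℂ)) s := by
  have h0 := ((Complex.ofRealCLM.hasDerivAt (x := s)).mul
    (Complex.ofRealCLM.hasDerivAt (x := s))).div_const 2
  have : ((Complex.ofRealCLM 1) * (Complex.ofRealCLM s)
      + (Complex.ofRealCLM s) * (Complex.ofRealCLM 1)) / 2 = (s : ℂ) := by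
    simp only [Complex.ofRealCLM_apply, Complex.ofReal_one]
    ring
  rw [this] at h0
  exact h0

lemma mvt_from_zero {f f' : ℝ → ℂ} {C θ : ℝ}
    (hder : ∀ s : ℝ, HasDerivAt f (f' s) s)
    (hbound : ∀ s ∈ Icc (-|θ|) |θ|, ‖f' s‖ ≤ C)
    (hf0 : f 0 = 0) : ‖f θ‖ ≤ C * |θ| := by
  have hconv : Convex ℝ (Icc (-|θ|) |θ|) := convex_Icc _ _
  have h0 : (0 : ℝ) ∈ Icc (-|θ|) |θ| := ⟨neg_nonpos.mpr (abs_nonneg θ), abs_nonneg θ⟩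
  have hθ : θ ∈ Icc (-|θ|) |θ| := ⟨neg_abs_le θ, le_abs_self θ⟩
  have h := hconv.norm_image_sub_le_of_norm_hasDerivWithin_le
    (fun s _ => (hder s).hasDerivWithinAt) hbound h0 hθ
  simpa [hf0, Real.norm_eq_abs] using h

lemma taylor1 (θ : ℝ) : ‖Complex.exp ((θ : ℂ) * I) - 1‖ ≤ |θ| := by
  have h := mvt_from_zero (f := fun s : ℝ => Complex.exp ((s : ℂ) * I) - 1)
    (f' := fun s : ℝ => Complex.exp ((s : ℂ) * I) * I) (C := 1) (θ := θ)
    (fun s => (hasDerivAt_cexp_mul_I s).sub_const 1)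
    (fun s _ => by
      rw [norm_mul, Complex.norm_exp_ofReal_mul_I,
        Complex.norm_I, mul_one])
    (by simp)
  simpa using h

lemma taylor2 (θ : ℝ) : ‖Complex.exp ((θ : ℂ) * I) - 1 - (θ : ℂ) * I‖ ≤ |θ| * |θ| := by
  apply mvt_from_zero (f := fun s : ℝ => Complex.exp ((s : ℂ) * I) - 1 - (s : ℂ) * I)
    (f' := fun s : ℝ => Complex.exp ((s : ℂ) * I) * I - I)
  · exact fun s => ((hasDerivAt_cexp_mul_I s).sub_const 1).sub (hasDerivAt_linear s)
  · intro s hs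
    have : Complex.exp ((s : ℂ) * I) * I - I = (Complex.exp ((s : ℂ) * I) - 1) * I := by ring
    rw [this, norm_mul, Complex.norm_I, mul_one]
    exact (taylor1 s).trans (abs_le.mpr ⟨hs.1, hs.2⟩)
  · simp

lemma taylor3 (θ : ℝ) :
    ‖Complex.exp ((θ : ℂ) * I) - 1 - (θ : ℂ) * I + ((θ : ℂ) * (θ : ℂ)) / 2‖
      ≤ |θ| * |θ| * |θ| := by
  apply mvt_from_zero
    (f := fun s : ℝ => Complex.exp ((s : ℂ) * I) - 1 - (s : ℂ) * I + ((s : ℂ) * (s : ℂ)) / 2)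
    (f' := fun s : ℝ => Complex.exp ((s : ℂ) * I) * I - I + (s : ℂ))
  · exact fun s => (((hasDerivAt_cexp_mul_I s).sub_const 1).sub (hasDerivAt_linear s)).add
      (hasDerivAt_sq_half s)
  · intro s hs
    have : Complex.exp ((s : ℂ) * I) * I - I + (s : ℂ)
        = (Complex.exp ((s : ℂ) * I) - 1 - (s : ℂ) * I) * I := by
      rw [sub_mul, sub_mul, mul_assoc, Complex.I_mul_I]
      ring
    rw [this, norm_mul, Complex.norm_I, mul_one]
    refine (taylor2 s).trans ?_
    have hs' : |s| ≤ |θ| := abs_le.mpr ⟨hs.1, hs.2⟩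
    exact mul_le_mul hs' hs' (abs_nonneg s) (abs_nonneg θ)
  · simp

/-- `y^3 ≤ 8 e^{y²/2}` for `y ≥ 0`. -/
lemma cube_le_exp {y : ℝ} (hy : 0 ≤ y) : y ^ 3 ≤ 8 * Real.exp (y ^ 2 / 2) := by
  rcases le_or_gt y 2 with h | h
  · have : y ^ 3 ≤ 8 := by
      calc y ^ 3 ≤ 2 ^ 3 := pow_le_pow_left₀ hy h 3
        _ = 8 := by norm_num
    have h1 : (1 : ℝ) ≤ Real.exp (y ^ 2 / 2) := Real.one_le_exp (by positivity)
    nlinarith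
  · have hx : y ^ 2 / 4 + 1 ≤ Real.exp (y ^ 2 / 4) := Real.add_one_le_exp _
    have hsq : (y ^ 2 / 4) ^ 2 ≤ Real.exp (y ^ 2 / 4) ^ 2 := by
      have h0 : (0 : ℝ) ≤ y ^ 2 / 4 := by positivity
      nlinarith [Real.exp_pos (y ^ 2 / 4)]
    have hexp2 : Real.exp (y ^ 2 / 4) ^ 2 = Real.exp (y ^ 2 / 2) := by
      rw [← Real.exp_nat_mul]
      norm_num
      ring_nf
    rw [hexp2] at hsq
    nlinarith

/-- Pointwise domination: `|θ|³ e^{-bθ²} ≤ 8 (√b)⁻³ e^{-bθ²/2}`. -/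
lemma cube_mul_exp_le {b θ : ℝ} (hb : 0 < b) :
    |θ| ^ 3 * Real.exp (-b * θ ^ 2) ≤ 8 * ((Real.sqrt b)⁻¹) ^ 3 * Real.exp (-(b / 2) * θ ^ 2) := by
  have hsb : 0 < Real.sqrt b := Real.sqrt_pos.mpr hb
  set y := Real.sqrt b * |θ| with hy
  have hy0 : 0 ≤ y := by positivity
  have hysq : y ^ 2 = b * θ ^ 2 := by
    rw [hy, mul_pow, Real.sq_sqrt hb.le, _root_.sq_abs]
  have hcube := cube_le_exp hy0
  have hθ3 : |θ| ^ 3 = y ^ 3 * ((Real.sqrt b)⁻¹) ^ 3 := by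
    rw [hy]
    field_simp
  rw [hθ3]
  have h8 : y ^ 3 * ((Real.sqrt b)⁻¹) ^ 3 * Real.exp (-b * θ ^ 2)
      ≤ (8 * Real.exp (y ^ 2 / 2)) * ((Real.sqrt b)⁻¹) ^ 3 * Real.exp (-b * θ ^ 2) := by
    apply mul_le_mul_of_nonneg_right _ (Real.exp_pos _).le
    exact mul_le_mul_of_nonneg_right hcube (by positivity)
  refine h8.trans (le_of_eq ?_)
  rw [hysq]
  rw [show (8 * Real.exp (b * θ ^ 2 / 2)) * ((Real.sqrt b)⁻¹) ^ 3 * Real.exp (-b * θ ^ 2)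
      = 8 * ((Real.sqrt b)⁻¹) ^ 3 * (Real.exp (b * θ ^ 2 / 2) * Real.exp (-b * θ ^ 2)) from by
      ring]
  rw [← Real.exp_add]
  congr 1
  ring


/-- The summand family for the inversion formula. -/
def Fkj (l l' : ℝ) (a : ℤ) (p : ℕ × ℕ) (θ : ℝ) : ℂ :=
  ((poisPMF l' p.1 : ℝ) : ℂ) * ((poisPMF l p.2 : ℝ) : ℂ) *
    Complex.exp ((((p.2 : ℤ) - p.1 - a : ℤ) : ℂ) * (θ : ℝ) * I)

lemma Fkj_pointwise {l l' : ℝ} (a : ℤ) (θ : ℝ) :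
    Complex.exp ((l : ℂ) * (Complex.exp ((θ : ℂ) * I) - 1)
        + (l' : ℂ) * (Complex.exp (-(θ : ℂ) * I) - 1)) * Complex.exp (-(a : ℂ) * θ * I)
      = ∑' p : ℕ × ℕ, Fkj l l' a p θ := by
  have hw : ‖Complex.exp (-(θ:ℂ) * I)‖ = 1 := by
    have : (-(θ:ℂ) * I) = ((-θ : ℝ) : ℂ) * I := by push_cast; ring
    rw [this, Complex.norm_exp_ofReal_mul_I]
  have hw' : ‖Complex.exp ((θ:ℂ) * I)‖ = 1 := Complex.norm_exp_ofReal_mul_I θ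
  rw [Complex.exp_add]
  rw [← pois_char l (Complex.exp ((θ:ℂ) * I)), ← pois_char l' (Complex.exp (-(θ:ℂ) * I))]
  rw [mul_comm (∑' j : ℕ, (poisPMF l j : ℂ) * Complex.exp ((θ:ℂ) * I) ^ j)]
  rw [tsum_mul_tsum_of_summable_norm (summable_char l' _ hw) (summable_char l _ hw')]
  rw [← tsum_mul_right]
  congr 1
  funext p
  unfold Fkj
  rw [← Complex.exp_nat_mul, ← Complex.exp_nat_mul]
  have hexp : Complex.exp ((p.1 : ℂ) * (-(θ:ℂ) * I)) *
      (Complex.exp ((p.2 : ℂ) * ((θ:ℂ) * I)) * Complex.exp (-(a:ℂ) * (θ:ℂ) * I))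
      = Complex.exp ((((p.2 : ℤ) - p.1 - a : ℤ) : ℂ) * (θ : ℝ) * I) := by
    rw [← Complex.exp_add, ← Complex.exp_add]
    congr 1
    push_cast
    ring
  rw [← hexp]
  ring

set_option maxHeartbeats 1000000 in
lemma PVV_inversion {l l' : ℝ} (hl : 0 < l) (hl' : 0 < l') (a : ℤ) :
    (2 * Real.pi : ℂ) * ((PVV l l' a : ℝ) : ℂ) =
      ∫ θ : ℝ in Ioc (-Real.pi) Real.pi,
        Complex.exp ((l : ℂ) * (Complex.exp ((θ : ℂ) * I) - 1)
          + (l' : ℂ) * (Complex.exp (-(θ : ℂ) * I) - 1)) * Complex.exp (-(a : ℂ) * θ * I) := by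
  have hμS : volume (Ioc (-Real.pi) Real.pi) = ENNReal.ofReal (2 * Real.pi) := by
    rw [Real.volume_Ioc]; congr 1; ring
  -- rewrite integrand as tsum
  have h1 : ∫ θ : ℝ in Ioc (-Real.pi) Real.pi,
        Complex.exp ((l : ℂ) * (Complex.exp ((θ : ℂ) * I) - 1)
          + (l' : ℂ) * (Complex.exp (-(θ : ℂ) * I) - 1)) * Complex.exp (-(a : ℂ) * θ * I)
      = ∫ θ : ℝ in Ioc (-Real.pi) Real.pi, ∑' p : ℕ × ℕ, Fkj l l' a p θ := by
    refine setIntegral_congr_fun measurableSet_Ioc fun θ _ => ?_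
    exact Fkj_pointwise a θ
  -- swap integral and sum
  have hmeas : ∀ p : ℕ × ℕ, AEStronglyMeasurable (Fkj l l' a p)
      (volume.restrict (Ioc (-Real.pi) Real.pi)) := by
    intro p
    apply Continuous.aestronglyMeasurable
    unfold Fkj
    fun_prop
  have hnorm : ∀ (p : ℕ × ℕ) (θ : ℝ), ‖Fkj l l' a p θ‖₊
      = ‖poisPMF l' p.1‖₊ * ‖poisPMF l p.2‖₊ := by
    intro p θ
    unfold Fkj
    have : ((((p.2 : ℤ) - p.1 - a : ℤ) : ℂ) * (θ : ℝ) * I)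
        = ((((p.2 : ℤ) - p.1 - a : ℤ) * θ : ℝ) : ℂ) * I := by push_cast; ring
    rw [this]
    simp only [nnnorm_mul]
    have h1 : ‖Complex.exp (((((p.2 : ℤ) - p.1 - a : ℤ) * θ : ℝ) : ℂ) * I)‖₊ = 1 := by
      ext
      rw [coe_nnnorm, Complex.norm_exp_ofReal_mul_I, NNReal.coe_one]
    rw [h1, mul_one, Complex.nnnorm_real, Complex.nnnorm_real]
  have hsum : ∑' p : ℕ × ℕ, ∫⁻ θ in Ioc (-Real.pi) Real.pi, (‖Fkj l l' a p θ‖₊ : ENNReal) ≠ ⊤ := by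
    have hcalc : ∀ p : ℕ × ℕ, ∫⁻ θ in Ioc (-Real.pi) Real.pi, (‖Fkj l l' a p θ‖₊ : ENNReal)
        = (‖poisPMF l' p.1‖₊ * ‖poisPMF l p.2‖₊ : ℝ≥0) * ENNReal.ofReal (2 * Real.pi) := by
      intro p
      simp_rw [hnorm p]
      rw [lintegral_const, Measure.restrict_apply MeasurableSet.univ, Set.univ_inter, hμS]
    simp_rw [hcalc]
    rw [ENNReal.tsum_mul_right]
    apply ENNReal.mul_ne_top _ ENNReal.ofReal_ne_top
    push_cast
    rw [ENNReal.tsum_prod']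
    simp_rw [ENNReal.tsum_mul_left]
    rw [ENNReal.tsum_mul_right]
    apply ENNReal.mul_ne_top <;>
    · rw [ENNReal.tsum_coe_ne_top_iff_summable]
      apply NNReal.summable_coe.mp
      simp_rw [coe_nnnorm, Real.norm_eq_abs]
      exact (summable_poisPMF _).abs
  have h2 := integral_tsum hmeas hsum
  rw [h1, h2]
  -- compute each integral
  have h3 : ∀ p : ℕ × ℕ, ∫ θ : ℝ in Ioc (-Real.pi) Real.pi, Fkj l l' a p θ
      = ((poisPMF l' p.1 : ℝ) : ℂ) * ((poisPMF l p.2 : ℝ) : ℂ) *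
          (if ((p.2 : ℤ) - p.1 - a : ℤ) = 0 then (2 * Real.pi : ℂ) else 0) := by
    intro p
    unfold Fkj
    rw [integral_const_mul, integral_exp_int]
  simp_rw [h3]
  -- sum over pairs
  have hsummable : Summable (fun p : ℕ × ℕ => ((poisPMF l' p.1 : ℝ) : ℂ) * ((poisPMF l p.2 : ℝ) : ℂ) *
      (if ((p.2 : ℤ) - p.1 - a : ℤ) = 0 then (2 * Real.pi : ℂ) else 0)) := by
    apply Summable.of_norm_bounded
      (g := fun p : ℕ × ℕ => (poisPMF l' p.1 * poisPMF l p.2) * (2 * Real.pi))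
    · exact ((summable_poisPMF l').mul_of_nonneg (summable_poisPMF l)
        (fun k => poisPMF_nonneg hl'.le k) (fun j => poisPMF_nonneg hl.le j)).mul_right _
    · intro p
      rw [norm_mul, norm_mul]
      have h1 := poisPMF_nonneg hl'.le p.1
      have h2 := poisPMF_nonneg hl.le p.2
      rw [Complex.norm_real, Complex.norm_real, Real.norm_of_nonneg h1, Real.norm_of_nonneg h2]
      have hite : ‖(if ((p.2 : ℤ) - p.1 - a : ℤ) = 0 then (2 * (Real.pi : ℂ)) else 0)‖
          ≤ 2 * Real.pi := by
        split
        · rw [show (2 * (Real.pi : ℂ)) = ((2 * Real.pi : ℝ) : ℂ) by push_cast; ring,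
            Complex.norm_real, Real.norm_of_nonneg (by positivity)]
        · simp [Real.pi_pos.le]
      calc poisPMF l' p.1 * poisPMF l p.2 *
            ‖(if ((p.2 : ℤ) - p.1 - a : ℤ) = 0 then (2 * (Real.pi : ℂ)) else 0)‖
          ≤ poisPMF l' p.1 * poisPMF l p.2 * (2 * Real.pi) := by
            exact mul_le_mul_of_nonneg_left hite (by positivity)
        _ = poisPMF l' p.1 * poisPMF l p.2 * (2 * Real.pi) := rfl
  rw [hsummable.tsum_prod' (fun k => hsummable.prod_factor k)]
  have hinner : ∀ k : ℕ, (∑' j : ℕ, ((poisPMF l' k : ℝ) : ℂ) * ((poisPMF l j : ℝ) : ℂ) *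
      (if ((j : ℤ) - k - a : ℤ) = 0 then (2 * (Real.pi : ℂ)) else 0))
      = (2 * (Real.pi : ℂ)) *
        (((if 0 ≤ (k : ℤ) + a then poisPMF l' k * poisPMF l ((k : ℤ) + a).toNat else 0 : ℝ)) : ℂ) := by
    intro k
    rcases le_or_gt 0 ((k : ℤ) + a) with h | h
    · rw [tsum_eq_single ((k : ℤ) + a).toNat ?_]
      · have hj : ((((k : ℤ) + a).toNat : ℤ) - k - a : ℤ) = 0 := by
          rw [Int.toNat_of_nonneg h]; ring
        rw [if_pos hj, if_pos h]
        push_cast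
        ring
      · intro j hj
        have hne : ¬ (((j : ℤ) - k - a : ℤ) = 0) := by
          intro hc
          apply hj
          have : (j : ℤ) = (k : ℤ) + a := by linarith [hc]
          omega
        rw [if_neg hne, mul_zero]
    · have hz : ∀ j : ℕ, ((poisPMF l' k : ℝ) : ℂ) * ((poisPMF l j : ℝ) : ℂ) *
          (if ((j : ℤ) - k - a : ℤ) = 0 then (2 * (Real.pi : ℂ)) else 0) = 0 := by
        intro j
        have hne : ¬ (((j : ℤ) - k - a : ℤ) = 0) := by omega
        rw [if_neg hne, mul_zero]
      rw [tsum_congr hz, tsum_zero, if_neg (not_le.mpr h)]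
      simp
  simp_rw [hinner]
  rw [tsum_mul_left, ← Complex.ofReal_tsum]
  rfl


lemma gauss_int {m : ℝ} (hm : 0 < m) (t : ℝ) :
    ∫ θ : ℝ, Complex.exp (I * (t : ℂ) * θ) * Complex.exp (-((m : ℂ)/2) * θ ^ 2)
      = ((Real.sqrt (2 * Real.pi / m) : ℝ) : ℂ) * Complex.exp (-((t : ℂ)^2) / (2 * m)) := by
  have hb : (0 : ℝ) < ((m : ℂ)/2).re := by
    simp [Complex.div_re]
    positivity
  have h := fourierIntegral_gaussian hb (t : ℂ)
  rw [h]
  congr 1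
  · rw [show ((Real.pi : ℂ) / ((m : ℂ)/2)) = ((2 * Real.pi / m : ℝ) : ℂ) by push_cast; ring,
      show (1/2 : ℂ) = ((1/2 : ℝ) : ℂ) by norm_num,
      ← Complex.ofReal_cpow (by positivity), Real.sqrt_eq_rpow]
  · congr 1
    rw [show (4 * ((m : ℂ)/2)) = 2 * (m : ℂ) by ring]

lemma gauss_target {l l' : ℝ} (hl : 0 < l) (hl' : 0 < l') (a : ℤ) :
    (2 * Real.pi : ℂ) * (((Real.sqrt (l + l'))⁻¹ *
        gaussD 1 ((-l + l' + (a : ℝ)) / Real.sqrt (l + l')) : ℝ) : ℂ)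
      = ∫ θ : ℝ, Complex.exp (I * ((l - l' - (a : ℝ) : ℝ) : ℂ) * θ) *
          Complex.exp (-(((l + l' : ℝ) : ℂ)/2) * θ ^ 2) := by
  have hm : 0 < l + l' := by linarith
  rw [gauss_int hm (l - l' - (a : ℝ))]
  have hreal : (2 * Real.pi) * ((Real.sqrt (l + l'))⁻¹ *
        gaussD 1 ((-l + l' + (a : ℝ)) / Real.sqrt (l + l')))
      = Real.sqrt (2 * Real.pi / (l + l')) *
          Real.exp (-(l - l' - (a : ℝ))^2 / (2 * (l + l'))) := by
    unfold gaussD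
    rw [mul_one, mul_one]
    have hx : ((-l + l' + (a : ℝ)) / Real.sqrt (l + l')) ^ 2
        = (l - l' - (a : ℝ))^2 / (l + l') := by
      rw [div_pow, Real.sq_sqrt hm.le]
      congr 1
      ring
    rw [hx]
    have h2 : -((l - l' - (a : ℝ))^2 / (l + l')) / 2 = -(l - l' - (a : ℝ))^2 / (2 * (l + l')) := by
      rw [← neg_div, div_div, mul_comm]
    rw [h2]
    rw [Real.sqrt_div (by positivity : (0:ℝ) ≤ 2 * Real.pi) (l + l')]
    have hs1 : 0 < Real.sqrt (2 * Real.pi) := Real.sqrt_pos.mpr (by positivity)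
    have hs2 : 0 < Real.sqrt (l + l') := Real.sqrt_pos.mpr hm
    have h2pi : 2 * Real.pi = Real.sqrt (2 * Real.pi) * Real.sqrt (2 * Real.pi) :=
      (Real.mul_self_sqrt (by positivity)).symm
    rw [h2pi]
    field_simp
    ring
    rw [Real.sq_sqrt (sq_nonneg (Real.sqrt (Real.pi * 2)))]
  rw [show (-(((l - l' - (a : ℝ) : ℝ)) : ℂ)^2 / (2 * ((l + l' : ℝ) : ℂ)))
      = ((-(l - l' - (a : ℝ))^2 / (2 * (l + l')) : ℝ) : ℂ) by push_cast; ring]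
  rw [← Complex.ofReal_exp, ← Complex.ofReal_mul, ← hreal]
  push_cast
  ring


def Fker (l l' : ℝ) (a : ℤ) (θ : ℝ) : ℂ :=
  Complex.exp ((l : ℂ) * (Complex.exp ((θ : ℂ) * I) - 1)
    + (l' : ℂ) * (Complex.exp (-(θ : ℂ) * I) - 1) + (-(a : ℂ) * θ * I))

def Gker (m t : ℝ) (θ : ℝ) : ℂ :=
  Complex.exp (I * (t : ℂ) * θ + (-((m : ℂ)/2) * θ ^ 2))

lemma Gker_norm (m t θ : ℝ) : ‖Gker m t θ‖ = Real.exp (-(m/2) * θ ^ 2) := by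
  rw [Gker, Complex.norm_exp]
  congr 1
  simp [Complex.add_re, Complex.mul_re, Complex.I_re, Complex.I_im, Complex.ofReal_re,
    Complex.ofReal_im, Complex.div_re, Complex.normSq, ← Complex.ofReal_pow]

lemma Gker_integrable {m : ℝ} (hm : 0 < m) (t : ℝ) : Integrable (Gker m t) := by
  have hmre : (0 : ℝ) < ((m : ℂ)/2).re := by
    rw [show ((m : ℂ)/2) = ((m/2 : ℝ) : ℂ) by push_cast; ring, Complex.ofReal_re]
    positivity
  have hGeq : Gker m t = fun θ : ℝ =>
      Complex.exp (-((m : ℂ)/2) * θ ^ 2 + (I * (t : ℂ)) * θ + 0) := by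
    funext θ
    rw [Gker]
    congr 1
    ring
  rw [hGeq]
  exact integrable_cexp_quadratic hmre _ _

lemma Fker_continuous (l l' : ℝ) (a : ℤ) : Continuous (Fker l l' a) := by
  unfold Fker
  fun_prop

lemma Fker_re (l l' : ℝ) (a : ℤ) (θ : ℝ) : ((l : ℂ) * (Complex.exp ((θ : ℂ) * I) - 1)
    + (l' : ℂ) * (Complex.exp (-(θ : ℂ) * I) - 1) + (-(a : ℂ) * θ * I)).re
    = (l + l') * (Real.cos θ - 1) := by
  have hre : (Complex.exp (-((θ : ℂ) * I))).re = Real.cos θ := by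
    rw [show -((θ : ℂ) * I) = ((-θ : ℝ) : ℂ) * I by push_cast; ring,
      Complex.exp_ofReal_mul_I_re, Real.cos_neg]
  simp [Complex.add_re, Complex.mul_re, Complex.I_re, Complex.I_im,
    Complex.exp_ofReal_mul_I_re, Complex.exp_ofReal_mul_I_im, hre]
  ring

lemma Gker_re (m t θ : ℝ) : (I * (t : ℂ) * θ + (-((m : ℂ)/2) * θ ^ 2)).re
    = -(m/2) * θ ^ 2 := by
  simp [Complex.add_re, Complex.mul_re, Complex.I_re, Complex.I_im, Complex.div_re,
    Complex.normSq, ← Complex.ofReal_pow]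

/-- Key pointwise estimate on `[-π, π]`. -/
lemma key_bound {l l' : ℝ} (hl : 0 < l) (hl' : 0 < l') (a : ℤ) {θ : ℝ} (hθ : |θ| ≤ Real.pi) :
    ‖Fker l l' a θ - Gker (l + l') (l - l' - (a : ℝ)) θ‖
      ≤ 8 * (l + l') * ((Real.sqrt (2 / Real.pi ^ 2 * (l + l')))⁻¹) ^ 3
          * Real.exp (-((2 / Real.pi ^ 2 * (l + l')) / 2) * θ ^ 2) := by
  have hπ := Real.pi_pos
  set m : ℝ := l + l' with hmdef
  have hm0 : 0 < m := by positivity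
  set b : ℝ := 2 / Real.pi ^ 2 * m with hbdef
  have hb0 : 0 < b := by positivity
  set t : ℝ := l - l' - (a : ℝ) with htdef
  set z1 : ℂ := (l : ℂ) * (Complex.exp ((θ : ℂ) * I) - 1)
    + (l' : ℂ) * (Complex.exp (-(θ : ℂ) * I) - 1) + (-(a : ℂ) * θ * I) with hz1
  set z2 : ℂ := I * (t : ℂ) * θ + (-((m : ℂ)/2) * θ ^ 2) with hz2
  have hcos : Real.cos θ ≤ 1 - 2 / Real.pi ^ 2 * θ ^ 2 := Real.cos_le_one_sub_mul_cos_sq hθ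
  have hre1' : z1.re ≤ -b * θ ^ 2 := by
    rw [hz1, Fker_re l l' a θ, ← hmdef, hbdef]
    nlinarith
  have hre2' : z2.re ≤ -b * θ ^ 2 := by
    rw [hz2, Gker_re m t θ, hbdef]
    have hpi2 : 2 / Real.pi ^ 2 ≤ 1 / 2 := by
      rw [div_le_div_iff₀ (by positivity) (by norm_num)]
      nlinarith [Real.pi_gt_three]
    have h2 := mul_le_mul_of_nonneg_right
      (mul_le_mul_of_nonneg_right hpi2 hm0.le) (sq_nonneg θ)
    nlinarith
  have hdiff : z1 - z2 = (l : ℂ) * (Complex.exp ((θ : ℂ) * I) - 1 - (θ : ℂ) * I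
        + ((θ : ℂ) * (θ : ℂ)) / 2)
      + (l' : ℂ) * (Complex.exp (((-θ : ℝ) : ℂ) * I) - 1 - ((-θ : ℝ) : ℂ) * I
        + (((-θ : ℝ) : ℂ) * ((-θ : ℝ) : ℂ)) / 2) := by
    rw [hz1, hz2, htdef, hmdef]
    push_cast
    ring
  have hnd : ‖z1 - z2‖ ≤ m * |θ| ^ 3 := by
    rw [hdiff]
    calc ‖_ + _‖ ≤ ‖(l : ℂ)‖ * ‖Complex.exp ((θ : ℂ) * I) - 1 - (θ : ℂ) * I
          + ((θ : ℂ) * (θ : ℂ)) / 2‖ + ‖(l' : ℂ)‖ * ‖Complex.exp (((-θ : ℝ) : ℂ) * I) - 1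
          - ((-θ : ℝ) : ℂ) * I + (((-θ : ℝ) : ℂ) * ((-θ : ℝ) : ℂ)) / 2‖ := by
          refine (norm_add_le _ _).trans ?_
          rw [norm_mul, norm_mul]
      _ ≤ l * (|θ| * |θ| * |θ|) + l' * (|(-θ)| * |(-θ)| * |(-θ)|) := by
          gcongr
          · rw [Complex.norm_real, Real.norm_of_nonneg hl.le]
          · exact taylor3 θ
          · rw [Complex.norm_real, Real.norm_of_nonneg hl'.le]
          · exact taylor3 (-θ)
      _ = m * |θ| ^ 3 := by
          rw [abs_neg, hmdef]
          ring
  have hcomb : ‖Fker l l' a θ - Gker m t θ‖ ≤ Real.exp (-b * θ ^ 2) * (m * |θ| ^ 3) := by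
    have h1 := exp_diff_le (m := -b * θ ^ 2) hre1' hre2'
    exact h1.trans (mul_le_mul_of_nonneg_left hnd (Real.exp_pos _).le)
  refine hcomb.trans ?_
  have hc := cube_mul_exp_le (θ := θ) hb0
  calc Real.exp (-b * θ ^ 2) * (m * |θ| ^ 3)
      = m * (|θ| ^ 3 * Real.exp (-b * θ ^ 2)) := by ring
    _ ≤ m * (8 * ((Real.sqrt b)⁻¹) ^ 3 * Real.exp (-(b / 2) * θ ^ 2)) :=
        mul_le_mul_of_nonneg_left hc hm0.le
    _ = 8 * m * ((Real.sqrt b)⁻¹) ^ 3 * Real.exp (-(b / 2) * θ ^ 2) := by ring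



set_option maxHeartbeats 1000000 in
lemma main_large {l l' : ℝ} (hl : 0 < l) (hl' : 0 < l') (hm : 1 ≤ l + l') (a : ℤ) :
    |PVV l l' a -
        (Real.sqrt (l + l'))⁻¹ * gaussD 1 ((-l + l' + (a : ℝ)) / Real.sqrt (l + l'))| ≤
      ((2 * Real.pi ^ 4 * Real.sqrt (2 * Real.pi) + 8 * Real.sqrt Real.pi / Real.pi ^ 2)
          / (2 * Real.pi)) / (l + l') := by
  have hπ := Real.pi_pos
  have hm0 : (0 : ℝ) < l + l' := by positivity
  have hb0 : (0 : ℝ) < 2 / Real.pi ^ 2 * (l + l') := by positivity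
  -- identities
  have h1 : (2 * Real.pi : ℂ) * ((PVV l l' a : ℝ) : ℂ)
      = ∫ θ : ℝ in Ioc (-Real.pi) Real.pi, Fker l l' a θ := by
    rw [PVV_inversion hl hl' a]
    refine setIntegral_congr_fun measurableSet_Ioc fun θ _ => ?_
    simp only [Fker, Complex.exp_add]
  have h2 : (2 * Real.pi : ℂ) * (((Real.sqrt (l + l'))⁻¹ *
        gaussD 1 ((-l + l' + (a : ℝ)) / Real.sqrt (l + l')) : ℝ) : ℂ)
      = ∫ θ : ℝ, Gker (l + l') (l - l' - (a : ℝ)) θ := by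
    rw [gauss_target hl hl' a]
    refine integral_congr_ae (Eventually.of_forall fun θ => ?_)
    rw [Gker, Complex.exp_add]
  -- integrability facts
  have hGint := Gker_integrable hm0 (l - l' - (a : ℝ))
  have hFS : IntegrableOn (Fker l l' a) (Ioc (-Real.pi) Real.pi) :=
    (Fker_continuous l l' a).integrableOn_Ioc
  have hGS : IntegrableOn (Gker (l + l') (l - l' - (a : ℝ))) (Ioc (-Real.pi) Real.pi) :=
    hGint.integrableOn
  have hsplit := integral_add_compl (measurableSet_Ioc :
      MeasurableSet (Ioc (-Real.pi) Real.pi)) hGint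
  -- main identity
  have hmain : (2 * Real.pi : ℂ) * (((PVV l l' a - (Real.sqrt (l + l'))⁻¹ *
        gaussD 1 ((-l + l' + (a : ℝ)) / Real.sqrt (l + l')) : ℝ)) : ℂ)
      = (∫ θ : ℝ in Ioc (-Real.pi) Real.pi,
            (Fker l l' a θ - Gker (l + l') (l - l' - (a : ℝ)) θ))
        - ∫ θ : ℝ in (Ioc (-Real.pi) Real.pi)ᶜ, Gker (l + l') (l - l' - (a : ℝ)) θ := by
    rw [integral_sub hFS hGS]
    rw [Complex.ofReal_sub, mul_sub, h1, h2, ← hsplit]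
    ring
  -- bound the main term
  have hbnd1 : ‖∫ θ : ℝ in Ioc (-Real.pi) Real.pi,
        (Fker l l' a θ - Gker (l + l') (l - l' - (a : ℝ)) θ)‖
      ≤ 2 * Real.pi ^ 4 * Real.sqrt (2 * Real.pi) / (l + l') := by
    have hint : Integrable (fun θ : ℝ => 8 * (l + l') *
        ((Real.sqrt (2 / Real.pi ^ 2 * (l + l')))⁻¹) ^ 3 *
        Real.exp (-((2 / Real.pi ^ 2 * (l + l')) / 2) * θ ^ 2)) := by
      simp_rw [mul_assoc]
      exact ((integrable_exp_neg_mul_sq (by positivity)).const_mul _).const_mul _ |>.const_mul _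
    have hstep := norm_integral_le_of_norm_le hint.restrict
      (by
        filter_upwards [ae_restrict_mem measurableSet_Ioc] with θ hθ
        exact key_bound hl hl' a (abs_le.mpr ⟨hθ.1.le, hθ.2⟩))
    refine hstep.trans ?_
    have hle := setIntegral_le_integral (s := Ioc (-Real.pi) Real.pi) hint
      (Eventually.of_forall fun θ => by positivity)
    refine hle.trans ?_
    -- compute the full integral
    have hI : ∫ θ : ℝ, 8 * (l + l') * ((Real.sqrt (2 / Real.pi ^ 2 * (l + l')))⁻¹) ^ 3 *
        Real.exp (-((2 / Real.pi ^ 2 * (l + l')) / 2) * θ ^ 2)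
        = 8 * (l + l') * ((Real.sqrt (2 / Real.pi ^ 2 * (l + l')))⁻¹) ^ 3 *
          Real.sqrt (Real.pi / ((2 / Real.pi ^ 2 * (l + l')) / 2)) := by
      rw [integral_const_mul, integral_gaussian]
    rw [hI]
    -- algebra
    have hsb : 0 < Real.sqrt (2 / Real.pi ^ 2 * (l + l')) := Real.sqrt_pos.mpr hb0
    have hsq : (Real.sqrt (2 / Real.pi ^ 2 * (l + l'))) ^ 2 = 2 / Real.pi ^ 2 * (l + l') :=
      Real.sq_sqrt hb0.le
    have hdiv : Real.pi / ((2 / Real.pi ^ 2 * (l + l')) / 2)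
        = 2 * Real.pi / (2 / Real.pi ^ 2 * (l + l')) := by
      field_simp
    rw [hdiv, Real.sqrt_div (by positivity) _]
    have heq : 8 * (l + l') * ((Real.sqrt (2 / Real.pi ^ 2 * (l + l')))⁻¹) ^ 3 *
        (Real.sqrt (2 * Real.pi) / Real.sqrt (2 / Real.pi ^ 2 * (l + l')))
        = 8 * (l + l') * Real.sqrt (2 * Real.pi) / (2 / Real.pi ^ 2 * (l + l')) ^ 2 := by
      rw [show ((2 : ℝ) / Real.pi ^ 2 * (l + l')) ^ 2
          = ((Real.sqrt (2 / Real.pi ^ 2 * (l + l'))) ^ 2) ^ 2 by rw [hsq]]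
      field_simp
    rw [heq]
    apply le_of_eq
    have hπ' : Real.pi ≠ 0 := ne_of_gt hπ
    have hll : l + l' ≠ 0 := ne_of_gt hm0
    rw [div_eq_div_iff (by positivity) (by positivity)]
    field_simp
    ring
  -- bound the tail term
  have hbnd2 : ‖∫ θ : ℝ in (Ioc (-Real.pi) Real.pi)ᶜ, Gker (l + l') (l - l' - (a : ℝ)) θ‖
      ≤ 8 * Real.sqrt Real.pi / Real.pi ^ 2 / (l + l') := by
    refine (norm_integral_le_integral_norm _).trans ?_
    have hGnorm' : ∀ θ : ℝ, ‖Gker (l + l') (l - l' - (a : ℝ)) θ‖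
        = Real.exp (-((l + l')/2) * θ ^ 2) := fun θ => Gker_norm _ _ θ
    rw [setIntegral_congr_fun measurableSet_Ioc.compl (fun θ _ => hGnorm' θ)]
    have hint2 : Integrable (fun θ : ℝ =>
        Real.exp (-((l + l')/4) * Real.pi ^ 2) * Real.exp (-((l + l')/4) * θ ^ 2)) :=
      (integrable_exp_neg_mul_sq (by positivity)).const_mul _
    have hbd : ∀ θ ∈ (Ioc (-Real.pi) Real.pi)ᶜ, Real.exp (-((l + l')/2) * θ ^ 2)
        ≤ Real.exp (-((l + l')/4) * Real.pi ^ 2) * Real.exp (-((l + l')/4) * θ ^ 2) := by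
      intro θ hθ
      have hθ2 : Real.pi ^ 2 ≤ θ ^ 2 := by
        rw [mem_compl_iff, mem_Ioc, not_and_or] at hθ
        rcases hθ with h | h
        · push_neg at h
          nlinarith
        · push_neg at h
          nlinarith
      rw [← Real.exp_add]
      apply Real.exp_le_exp.mpr
      nlinarith
    calc ∫ θ : ℝ in (Ioc (-Real.pi) Real.pi)ᶜ, Real.exp (-((l + l')/2) * θ ^ 2)
        ≤ ∫ θ : ℝ in (Ioc (-Real.pi) Real.pi)ᶜ,
            Real.exp (-((l + l')/4) * Real.pi ^ 2) * Real.exp (-((l + l')/4) * θ ^ 2) :=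
          setIntegral_mono_on
            ((integrable_exp_neg_mul_sq (by positivity : (0:ℝ) < (l + l')/2)).integrableOn)
            hint2.integrableOn measurableSet_Ioc.compl hbd
      _ ≤ ∫ θ : ℝ, Real.exp (-((l + l')/4) * Real.pi ^ 2) * Real.exp (-((l + l')/4) * θ ^ 2) :=
          setIntegral_le_integral hint2 (Eventually.of_forall fun θ => by positivity)
      _ = Real.exp (-((l + l')/4) * Real.pi ^ 2) * Real.sqrt (Real.pi / ((l + l')/4)) := by
          rw [integral_const_mul, integral_gaussian]
      _ ≤ (((l + l')/4) * Real.pi ^ 2)⁻¹ * (2 * Real.sqrt Real.pi) := by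
          apply mul_le_mul
          · have hx : ((l + l')/4) * Real.pi ^ 2 ≤ Real.exp (((l + l')/4) * Real.pi ^ 2) := by
              have := Real.add_one_le_exp (((l + l')/4) * Real.pi ^ 2)
              linarith
            rw [show -((l + l')/4) * Real.pi ^ 2 = -(((l + l')/4) * Real.pi ^ 2) by ring,
              Real.exp_neg]
            exact inv_anti₀ (by positivity) hx
          · have h4 : Real.pi / ((l + l')/4) ≤ 4 * Real.pi := by
              rw [div_le_iff₀ (by positivity)]
              nlinarith
            refine (Real.sqrt_le_sqrt h4).trans ?_
            rw [show (4 : ℝ) * Real.pi = 2 ^ 2 * Real.pi by norm_num,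
              Real.sqrt_mul (by positivity), Real.sqrt_sq (by norm_num : (0:ℝ) ≤ 2)]
          · positivity
          · positivity
      _ ≤ 8 * Real.sqrt Real.pi / Real.pi ^ 2 / (l + l') := by
          apply le_of_eq
          have hπ' : Real.pi ≠ 0 := ne_of_gt hπ
          have hll : l + l' ≠ 0 := ne_of_gt hm0
          field_simp
          ring
  -- combine
  have hcomb : 2 * Real.pi * |PVV l l' a - (Real.sqrt (l + l'))⁻¹ *
        gaussD 1 ((-l + l' + (a : ℝ)) / Real.sqrt (l + l'))|
      ≤ (2 * Real.pi ^ 4 * Real.sqrt (2 * Real.pi) + 8 * Real.sqrt Real.pi / Real.pi ^ 2)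
          / (l + l') := by
    have hnorm : 2 * Real.pi * |PVV l l' a - (Real.sqrt (l + l'))⁻¹ *
          gaussD 1 ((-l + l' + (a : ℝ)) / Real.sqrt (l + l'))|
        = ‖(2 * Real.pi : ℂ) * (((PVV l l' a - (Real.sqrt (l + l'))⁻¹ *
            gaussD 1 ((-l + l' + (a : ℝ)) / Real.sqrt (l + l')) : ℝ)) : ℂ)‖ := by
      rw [norm_mul, Complex.norm_real, Real.norm_eq_abs]
      congr 1
      rw [show ((2 : ℂ) * (Real.pi : ℂ)) = ((2 * Real.pi : ℝ) : ℂ) by push_cast; ring,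
        Complex.norm_real, Real.norm_of_nonneg (by positivity)]
    rw [hnorm, hmain]
    refine (norm_sub_le _ _).trans ?_
    have := add_le_add hbnd1 hbnd2
    refine this.trans (le_of_eq ?_)
    rw [← add_div]
  -- finish
  have h2π : (0:ℝ) < 2 * Real.pi := by positivity
  rw [div_right_comm, le_div_iff₀ h2π]
  nlinarith [hcomb]

lemma main_small {l l' : ℝ} (hl : 0 < l) (hl' : 0 < l') (hm : l + l' ≤ 1) (a : ℤ) :
    |PVV l l' a -
        (Real.sqrt (l + l'))⁻¹ * gaussD 1 ((-l + l' + (a : ℝ)) / Real.sqrt (l + l'))| ≤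
      2 / (l + l') := by
  have hπ := Real.pi_pos
  have hm0 : (0 : ℝ) < l + l' := by positivity
  have hsm : 0 < Real.sqrt (l + l') := Real.sqrt_pos.mpr hm0
  have hP0 := PVV_nonneg hl.le hl'.le a
  have hP1 := PVV_le_one hl.le hl'.le a
  have hgd : gaussD 1 ((-l + l' + (a : ℝ)) / Real.sqrt (l + l')) ≤ 1 := by
    unfold gaussD
    have h1 : (1:ℝ) ≤ Real.sqrt (2 * Real.pi * 1) := by
      rw [Real.one_le_sqrt]
      nlinarith [Real.pi_gt_three]
    have h2 : Real.exp (-((-l + l' + (a : ℝ)) / Real.sqrt (l + l')) ^ 2 / (2 * 1)) ≤ 1 := by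
      rw [Real.exp_le_one_iff]
      have : (0:ℝ) ≤ ((-l + l' + (a : ℝ)) / Real.sqrt (l + l')) ^ 2 := sq_nonneg _
      nlinarith
    calc (Real.sqrt (2 * Real.pi * 1))⁻¹ *
          Real.exp (-((-l + l' + (a : ℝ)) / Real.sqrt (l + l')) ^ 2 / (2 * 1))
        ≤ 1 * 1 := by
          apply mul_le_mul _ h2 (Real.exp_pos _).le (by norm_num)
          exact inv_le_one_of_one_le₀ h1
      _ = 1 := by norm_num
  have hgd0 : 0 ≤ gaussD 1 ((-l + l' + (a : ℝ)) / Real.sqrt (l + l')) := by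
    unfold gaussD
    positivity
  have hms : l + l' ≤ Real.sqrt (l + l') := by
    nth_rewrite 1 [show (l + l' : ℝ) = Real.sqrt ((l + l') ^ 2) from (Real.sqrt_sq hm0.le).symm]
    apply Real.sqrt_le_sqrt
    nlinarith
  have hsq : (Real.sqrt (l + l'))⁻¹ ≤ (l + l')⁻¹ := inv_anti₀ hm0 hms
  have hGt : (Real.sqrt (l + l'))⁻¹ * gaussD 1 ((-l + l' + (a : ℝ)) / Real.sqrt (l + l'))
      ≤ (l + l')⁻¹ := by
    calc (Real.sqrt (l + l'))⁻¹ * gaussD 1 ((-l + l' + (a : ℝ)) / Real.sqrt (l + l'))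
        ≤ (Real.sqrt (l + l'))⁻¹ * 1 := mul_le_mul_of_nonneg_left hgd (by positivity)
      _ = (Real.sqrt (l + l'))⁻¹ := mul_one _
      _ ≤ (l + l')⁻¹ := hsq
  have h1m : (1:ℝ) ≤ (l + l')⁻¹ := by
    rw [le_inv_comm₀ (by norm_num) hm0]
    simpa using hm
  rw [abs_le]
  constructor
  · have : -(2 / (l + l')) ≤ -( (l+l')⁻¹) := by
      rw [neg_le_neg_iff]
      rw [div_eq_mul_inv]
      nlinarith
    refine this.trans ?_
    nlinarith [mul_nonneg (inv_nonneg.mpr hsm.le) hgd0]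
  · have : PVV l l' a - (Real.sqrt (l + l'))⁻¹ *
        gaussD 1 ((-l + l' + (a : ℝ)) / Real.sqrt (l + l')) ≤ PVV l l' a :=
      sub_le_self _ (mul_nonneg (by positivity) hgd0)
    refine this.trans (hP1.trans ?_)
    rw [div_eq_mul_inv]
    nlinarith


end SkellamAux

end

theorem stmt4 :
    ∃ C : ℝ, 0 < C ∧
      ∀ l l' : ℝ, 0 < l → 0 < l' → ∀ a : ℤ,
        |PVV l l' a -
          (Real.sqrt (l + l'))⁻¹ * gaussD 1 ((-l + l' + (a : ℝ)) / Real.sqrt (l + l'))| ≤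
        C / (l + l') := by
  have hπ := Real.pi_pos
  refine ⟨((2 * Real.pi ^ 4 * Real.sqrt (2 * Real.pi) + 8 * Real.sqrt Real.pi / Real.pi ^ 2)
      / (2 * Real.pi)) + 2, by positivity, fun l l' hl hl' a => ?_⟩
  have hm0 : (0:ℝ) < l + l' := by positivity
  rcases le_or_gt (l + l') 1 with h | h
  · refine (SkellamAux.main_small hl hl' h a).trans ?_
    gcongr
    have h0 : (0:ℝ) ≤ (2 * Real.pi ^ 4 * Real.sqrt (2 * Real.pi)
        + 8 * Real.sqrt Real.pi / Real.pi ^ 2) / (2 * Real.pi) := by positivity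
    linarith
  · refine (SkellamAux.main_large hl hl' h.le a).trans ?_
    gcongr
    linarith
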